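/- Let $K$ be a field, $\zeta \in K^\times$, and consider generators $\tilde\xi_{rs}$ for $1\le r<s\le n$ subject to the relations: $\tilde\xi_{rs}\tilde\xi_{rs'} = \zeta\tilde\xi_{rs'}\tilde\xi_{rs}$ for $r<s<s'$; $\tilde\xi_{rs}\tilde\xi_{r's} = \zeta\tilde\xi_{r's}\tilde\xi_{rs}$ for $r<r'<s$; $\tilde\xi_{rs}\tilde\xi_{r's'} = \tilde\xi_{r's'}\tilde\xi_{rs}$ for $r<r'<s'<s$ and for $r<s<r'<s'$; $\tilde\xi_{rs}\tilde\xi_{ss'} = \tilde\xi_{ss'}\tilde\xi_{rs} + (\zeta-\zeta^{-1})\tilde\xi_{rs'}$ for $r<s<s'$; and $\tilde\xi_{rs}\tilde\xi_{r's'} = \tilde\xi_{r's'}\tilde\xi_{rs} + (\zeta-\zeta^{-1})\tilde\xi_{r's}\tilde\xi_{rs'}$ for $r<r'<s<s'$. Then the monomials, taken in the fixed order where the factors $\tilde\xi_{rs}$ are arranged with first index $r$ decreasing from $n-1$ to $1$ and, within each fixed $r$, second index $s$ increasing, span the algebra generated by the $\tilde\xi_{rs}$ over $K$. -/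

import Mathlib

/-- The ordered monomial `ξ̃_{n-1,n}^{a_{n-1,n}} (ξ̃_{n-2,n-1}^{a_{n-2,n-1}} ξ̃_{n-2,n}^{a_{n-2,n}})
⋯ (ξ̃_{12}^{a_{12}} ⋯ ξ̃_{1n}^{a_{1n}})`: factors with first index `r` decreasing and, for
fixed `r`, second index `s` increasing. -/
noncomputable def orderedXiMono {A : Type*} [Ring A] {n : ℕ}
    (ξ : Fin n → Fin n → A) (a : Fin n → Fin n → ℕ) : A :=
  (((List.finRange n).reverse).map (fun r =>
      (((List.finRange n).filter (fun s => r < s)).map (fun s => ξ r s ^ a r s)).prod)).prod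

namespace XiAux

variable {n : ℕ}

/-- digit of a letter: letters in sorted order have increasing digits. -/
def dg (n : ℕ) (p : Fin n × Fin n) : ℕ := (n - 1 - p.1.val) * n + p.2.val + 1

lemma dg_pos (p : Fin n × Fin n) : 1 ≤ dg n p := by simp [dg]

lemma dg_le (p : Fin n × Fin n) : dg n p ≤ n * n := by
  have h1 : p.1.val < n := p.1.isLt
  have h2 : p.2.val < n := p.2.isLt
  have : (n - 1 - p.1.val) * n ≤ (n - 1) * n := Nat.mul_le_mul_right _ (by omega)
  have h3 : (n - 1) * n + n = n * n := by
    cases n with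
    | zero => simp
    | succ m => simp [Nat.succ_sub_one]; ring
  unfold dg; omega

lemma dg_lt (p : Fin n × Fin n) : dg n p < n * n + 1 := Nat.lt_succ_of_le (dg_le p)

lemma dg_inj {p q : Fin n × Fin n} (h : dg n p = dg n q) : p = q := by
  unfold dg at h
  have h1 : p.1.val < n := p.1.isLt
  have h2 : p.2.val < n := p.2.isLt
  have h3 : q.1.val < n := q.1.isLt
  have h4 : q.2.val < n := q.2.isLt
  have hm : ((n - 1 - p.1.val) * n + p.2.val) = ((n - 1 - q.1.val) * n + q.2.val) := by omega
  have e2 : p.2.val = q.2.val := by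
    have hmod := congrArg (· % n) hm
    simpa [Nat.mul_add_mod', Nat.mod_eq_of_lt h2, Nat.mod_eq_of_lt h4] using hmod
  have e1 : p.1.val = q.1.val := by
    have hq : (n - 1 - p.1.val) * n = (n - 1 - q.1.val) * n := by omega
    have := Nat.eq_of_mul_eq_mul_right (show 0 < n by omega) hq
    omega
  exact Prod.ext (Fin.ext e1) (Fin.ext e2)

/-- smaller first index means larger digit -/
lemma dg_lt_of_fst_lt {p q : Fin n × Fin n} (h : p.1 < q.1) : dg n q < dg n p := by
  have h1 : p.1.val < n := p.1.isLt
  have h3 : q.1.val < n := q.1.isLt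
  have h4 : q.2.val < n := q.2.isLt
  have hk : n - 1 - q.1.val + 1 ≤ n - 1 - p.1.val := by
    have := (Fin.lt_def.mp h); omega
  have : (n - 1 - q.1.val + 1) * n ≤ (n - 1 - p.1.val) * n := Nat.mul_le_mul_right _ hk
  unfold dg
  have : (n - 1 - q.1.val) * n + n ≤ (n - 1 - p.1.val) * n := by
    calc (n - 1 - q.1.val) * n + n = (n - 1 - q.1.val + 1) * n := by ring
    _ ≤ _ := ‹_›
  omega

lemma dg_lt_of_snd_lt {p q : Fin n × Fin n} (h1 : p.1 = q.1) (h2 : p.2 < q.2) :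
    dg n p < dg n q := by
  unfold dg
  rw [h1]
  have := Fin.lt_def.mp h2
  omega

/-- the weight of a word, base n²+1. -/
def mu (n : ℕ) (w : List (Fin n × Fin n)) : ℕ :=
  w.foldl (fun acc p => acc * (n * n + 1) + dg n p) 0

lemma foldl_eq (w : List (Fin n × Fin n)) : ∀ acc : ℕ,
    w.foldl (fun acc p => acc * (n * n + 1) + dg n p) acc
      = acc * (n * n + 1) ^ w.length + mu n w := by
  induction w with
  | nil => intro acc; simp [mu]
  | cons p v ih =>
    intro acc
    simp only [List.foldl_cons, List.length_cons, mu]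
    rw [ih, ih]
    ring

lemma mu_append (u v : List (Fin n × Fin n)) :
    mu n (u ++ v) = mu n u * (n * n + 1) ^ v.length + mu n v := by
  rw [show mu n (u ++ v) = List.foldl (fun acc p => acc * (n * n + 1) + dg n p) (mu n u) v
    from by simp [mu, List.foldl_append], foldl_eq]

lemma mu_lt (w : List (Fin n × Fin n)) : mu n w < (n * n + 1) ^ w.length := by
  induction w with
  | nil => simp [mu]
  | cons p v ih =>
    have : mu n (p :: v) = dg n p * (n * n + 1) ^ v.length + mu n v := by
      have := mu_append [p] v
      simpa [mu] using this
    rw [this, List.length_cons, pow_succ]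
    have h1 := dg_le p
    calc dg n p * (n * n + 1) ^ v.length + mu n v
        < dg n p * (n * n + 1) ^ v.length + (n * n + 1) ^ v.length := by omega
      _ = (dg n p + 1) * (n * n + 1) ^ v.length := by ring
      _ ≤ (n * n + 1) * (n * n + 1) ^ v.length := Nat.mul_le_mul_right _ (by omega)
      _ = (n * n + 1) ^ v.length * (n * n + 1) := by ring

lemma mu_nonempty_ge (w : List (Fin n × Fin n)) (hw : w ≠ []) :
    (n * n + 1) ^ (w.length - 1) ≤ mu n w := by
  cases w with
  | nil => simp at hw
  | cons p v =>
    have : mu n (p :: v) = dg n p * (n * n + 1) ^ v.length + mu n v := by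
      have := mu_append [p] v
      simpa [mu] using this
    rw [this]
    have := dg_pos p
    simp only [List.length_cons, Nat.add_sub_cancel]
    calc (n * n + 1) ^ v.length = 1 * (n * n + 1) ^ v.length := by ring
      _ ≤ dg n p * (n * n + 1) ^ v.length := Nat.mul_le_mul_right _ this
      _ ≤ _ := Nat.le_add_right _ _

/-- key comparison: replacing a segment by a shorter-or-equal-length, smaller-weight
segment strictly decreases the weight. -/
lemma mu_replace (u v x y : List (Fin n × Fin n)) (hlen : x.length ≤ y.length)
    (hxy : mu n x < mu n y) : mu n (u ++ x ++ v) < mu n (u ++ y ++ v) := by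
  rw [List.append_assoc, List.append_assoc, mu_append, mu_append, mu_append, mu_append]
  have h1 : mu n u * (n * n + 1) ^ (x ++ v).length ≤ mu n u * (n * n + 1) ^ (y ++ v).length := by
    apply Nat.mul_le_mul_left
    apply Nat.pow_le_pow_right (by omega)
    simp only [List.length_append]; omega
  have h2 : mu n x * (n * n + 1) ^ v.length + mu n v < mu n y * (n * n + 1) ^ v.length + mu n v := by
    have hv := mu_lt (n := n) v
    have : mu n x * (n * n + 1) ^ v.length + mu n v < (mu n x + 1) * (n * n + 1) ^ v.length := by
      have : (mu n x + 1) * (n * n + 1) ^ v.length = mu n x * (n * n + 1) ^ v.length + (n * n + 1) ^ v.length := by ring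
      omega
    have h3 : (mu n x + 1) * (n * n + 1) ^ v.length ≤ mu n y * (n * n + 1) ^ v.length :=
      Nat.mul_le_mul_right _ (by omega)
    omega
  omega

lemma mu_pair (p q : Fin n × Fin n) : mu n [p, q] = dg n p * (n * n + 1) + dg n q := by
  simp [mu]

lemma mu_single (p : Fin n × Fin n) : mu n [p] = dg n p := by simp [mu]

/-- pair vs pair with smaller leading digit -/
lemma mu_pair_lt {p q p' q' : Fin n × Fin n} (h : dg n p' < dg n p) :
    mu n [p', q'] < mu n [p, q] := by
  rw [mu_pair, mu_pair]
  have h1 := dg_le q'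
  have h2 : dg n p' * (n * n + 1) + dg n q' < (dg n p' + 1) * (n * n + 1) := by
    have : (dg n p' + 1) * (n * n + 1) = dg n p' * (n * n + 1) + (n * n + 1) := by ring
    omega
  have h3 : (dg n p' + 1) * (n * n + 1) ≤ dg n p * (n * n + 1) := Nat.mul_le_mul_right _ (by omega)
  omega

lemma mu_single_lt_pair (c p q : Fin n × Fin n) : mu n [c] < mu n [p, q] := by
  rw [mu_single, mu_pair]
  have h1 := dg_lt c
  have h2 := dg_pos p
  have : 1 * (n * n + 1) ≤ dg n p * (n * n + 1) := Nat.mul_le_mul_right _ h2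
  omega



def canonWord (n : ℕ) (a : Fin n → Fin n → ℕ) : List (Fin n × Fin n) :=
  (List.finRange n).reverse.flatMap (fun r =>
    ((List.finRange n).filter (fun s => r < s)).flatMap (fun s => List.replicate (a r s) (r, s)))

lemma prod_canonWord {A : Type*} [Ring A] (ξ : Fin n → Fin n → A) (a : Fin n → Fin n → ℕ) :
    (((List.finRange n).reverse).map (fun r =>
      (((List.finRange n).filter (fun s => r < s)).map (fun s => ξ r s ^ a r s)).prod)).prod
    = ((canonWord n a).map (fun p => ξ p.1 p.2)).prod := by
  unfold canonWord
  rw [List.map_flatMap, List.flatMap_def, List.prod_flatten, List.map_map]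
  congr 1
  apply List.map_congr_left
  intro r _
  simp only [Function.comp]
  rw [List.map_flatMap, List.flatMap_def, List.prod_flatten, List.map_map]
  congr 1
  apply List.map_congr_left
  intro s _
  simp [List.map_replicate, List.prod_replicate]

lemma mem_canonWord {a : Fin n → Fin n → ℕ} {p : Fin n × Fin n} (hp : p ∈ canonWord n a) :
    p.1 < p.2 := by
  unfold canonWord at hp
  rw [List.mem_flatMap] at hp
  obtain ⟨r, _, hp⟩ := hp
  rw [List.mem_flatMap] at hp
  obtain ⟨s, hs, hp⟩ := hp
  have h1 := of_decide_eq_true (List.mem_filter.mp hs).2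
  have h2 := List.eq_of_mem_replicate hp
  subst h2
  exact h1

lemma sorted_canonWord (a : Fin n → Fin n → ℕ) :
    (canonWord n a).Pairwise (fun p q => dg n p ≤ dg n q) := by
  unfold canonWord
  rw [List.flatMap_def, List.pairwise_flatten]
  constructor
  · intro l hl
    simp only [List.mem_map, List.mem_reverse, List.mem_finRange, true_and] at hl
    obtain ⟨r, hr⟩ := hl
    subst hr
    rw [List.flatMap_def, List.pairwise_flatten]
    refine ⟨?_, ?_⟩
    · intro l' hl'
      simp only [List.mem_map, List.mem_filter, List.mem_finRange, true_and] at hl'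
      obtain ⟨s, _, hs⟩ := hl'
      subst hs
      exact List.pairwise_replicate.mpr (Or.inr le_rfl)
    · rw [List.pairwise_map]
      apply List.Pairwise.filter
      apply (List.pairwise_lt_finRange n).imp
      intro s s' hss' x hx y hy
      rw [List.eq_of_mem_replicate hx, List.eq_of_mem_replicate hy]
      unfold dg
      have := Fin.lt_def.mp hss'
      simp only []
      omega
  · rw [List.pairwise_map, List.pairwise_reverse]
    apply (List.pairwise_lt_finRange n).imp
    intro r r' hrr' x hx y hy
    simp only [List.mem_flatMap, List.mem_filter, List.mem_finRange, true_and,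
      List.mem_replicate] at hx hy
    obtain ⟨s, hs, _, hxs⟩ := hx
    obtain ⟨s', hs', _, hys⟩ := hy
    subst hxs; subst hys
    -- x = (r', s), y = (r, s'), r < r' : dg (r',s) ≤ dg (r, s')
    unfold dg
    simp only []
    have h1 : r.val < r'.val := Fin.lt_def.mp hrr'
    have h2 : r'.val < n := r'.isLt
    have h3 : s.val < n := s.isLt
    have hk : n - 1 - r'.val + 1 ≤ n - 1 - r.val := by omega
    have : (n - 1 - r'.val + 1) * n ≤ (n - 1 - r.val) * n := Nat.mul_le_mul_right _ hk
    have : (n - 1 - r'.val) * n + n ≤ (n - 1 - r.val) * n := by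
      calc (n - 1 - r'.val) * n + n = (n - 1 - r'.val + 1) * n := by ring
      _ ≤ _ := ‹_›
    omega

lemma sum_map_filter {α : Type*} (l : List α) (p : α → Bool) (f : α → ℕ) :
    ((l.filter p).map f).sum = (l.map (fun x => if p x then f x else 0)).sum := by
  induction l with
  | nil => simp
  | cons x t ih =>
    by_cases h : p x <;> simp [List.filter_cons, h, ih]

lemma beq_unique {α : Type*} (i1 i2 : BEq α) (h1 : @LawfulBEq α i1) (h2 : @LawfulBEq α i2) :
    i1 = i2 := by
  rcases i1 with ⟨f⟩; rcases i2 with ⟨g⟩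
  congr 1
  funext x y
  have e1 : (f x y = true) ↔ x = y := @beq_iff_eq α ⟨f⟩ h1 x y
  have e2 : (g x y = true) ↔ x = y := @beq_iff_eq α ⟨g⟩ h2 x y
  cases hf : f x y <;> cases hg : g x y <;> simp_all

lemma count_eq_count {α : Type*} {i1 i2 : BEq α} [h1 : @LawfulBEq α i1] [h2 : @LawfulBEq α i2]
    (a : α) (l : List α) : @List.count α i1 a l = @List.count α i2 a l := by
  cases beq_unique i1 i2 h1 h2; rfl

lemma count_canonWord [inst : BEq (Fin n × Fin n)] [instL : LawfulBEq (Fin n × Fin n)]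
    (a : Fin n → Fin n → ℕ) (p : Fin n × Fin n) :
    (canonWord n a).count p = if p.1 < p.2 then a p.1 p.2 else 0 := by
  unfold canonWord
  rw [List.count_flatMap]
  have inner : ∀ r : Fin n,
      (List.count p ∘ fun r => ((List.finRange n).filter (fun s => r < s)).flatMap
        (fun s => List.replicate (a r s) (r, s))) r
      = if r = p.1 ∧ p.1 < p.2 then a p.1 p.2 else 0 := by
    intro r
    simp only [Function.comp]
    rw [List.count_flatMap]
    have : List.map (List.count p ∘ fun s => List.replicate (a r s) (r, s))
        ((List.finRange n).filter (fun s => r < s))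
        = List.map (fun s => if (r, s) = p then a r s else 0)
          ((List.finRange n).filter (fun s => r < s)) := by
      apply List.map_congr_left
      intro s _
      simp only [Function.comp, List.count_replicate]
      split_ifs with h1 h2 h2 <;> simp_all [beq_iff_eq]
    rw [this, sum_map_filter, ← Fin.sum_univ_def]
    rw [show (fun s : Fin n => if (decide (r < s) : Bool) then (if (r, s) = p then a r s else 0) else 0)
      = (fun s : Fin n => if s = p.2 then (if r = p.1 ∧ p.1 < p.2 then a p.1 p.2 else 0) else 0) from ?_]
    · rw [Finset.sum_ite_eq' Finset.univ p.2]
      simp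
    · funext s
      rcases p with ⟨p1, p2⟩
      simp only [Prod.mk.injEq, decide_eq_true_eq]
      by_cases h1 : s = p2 <;> by_cases h2 : r = p1 <;> by_cases h3 : r < s <;>
        subst_eqs <;> simp_all
  rw [List.map_congr_left (fun r _ => inner r)]
  rw [show (fun r : Fin n => if r = p.1 ∧ p.1 < p.2 then a p.1 p.2 else 0)
    = (fun r : Fin n => if r = p.1 then (if p.1 < p.2 then a p.1 p.2 else 0) else 0) from by
      funext r; split_ifs <;> simp_all]
  rw [List.map_reverse, List.sum_reverse, ← Fin.sum_univ_def,
    Finset.sum_ite_eq' Finset.univ p.1]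
  simp

lemma orderedXiMono_eq {A : Type*} [Ring A] (ξ : Fin n → Fin n → A) (a : Fin n → Fin n → ℕ) :
    orderedXiMono ξ a = ((canonWord n a).map (fun p => ξ p.1 p.2)).prod := by
  unfold orderedXiMono
  exact prod_canonWord ξ a

lemma sorted_eq_canonWord {w : List (Fin n × Fin n)} (hval : ∀ p ∈ w, p.1 < p.2)
    (hsort : w.Pairwise (fun p q => dg n p ≤ dg n q)) :
    w = canonWord n (fun r s => w.count (r, s)) := by
  haveI : IsAntisymm (Fin n × Fin n) (fun p q => dg n p ≤ dg n q) :=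
    ⟨fun a b h1 h2 => dg_inj (le_antisymm h1 h2)⟩
  refine List.Perm.eq_of_pairwise (fun a b _ _ h1 h2 => dg_inj (le_antisymm h1 h2)) hsort (sorted_canonWord _) ?_
  rw [List.perm_iff_count]
  intro p
  rw [count_canonWord (inst := instBEqProd) (fun r s => w.count (r, s)) p]
  split_ifs with h
  · rfl
  · exact List.count_eq_zero.mpr (fun hc => h (hval p hc))

lemma not_chain'_split {α : Type*} (R : α → α → Prop) :
    ∀ w : List α, ¬ w.Chain' R → ∃ u a b v, w = u ++ a :: b :: v ∧ ¬ R a b := by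
  intro w
  induction w with
  | nil => intro h; exact absurd List.isChain_nil h
  | cons x t ih =>
    intro h
    cases t with
    | nil => exact absurd (List.isChain_singleton x) h
    | cons y t' =>
      simp only [List.Chain', List.isChain_cons_cons] at h
      by_cases hxy : R x y
      · have hc : ¬ (y :: t').Chain' R := fun hc => h ⟨hxy, hc⟩
        obtain ⟨u, a, b, v, heq, hab⟩ := ih hc
        exact ⟨x :: u, a, b, v, by rw [heq]; rfl, hab⟩
      · exact ⟨[], x, y, t', rfl, hxy⟩

section Main

variable {K : Type*} [Field K] {A : Type*} [Ring A] [Algebra K A]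
  (ξ : Fin n → Fin n → A) (ζ : K)

lemma wordProd_mem (hζ : ζ ≠ 0)
    (rel1 : ∀ r s s' : Fin n, r < s → s < s' → ξ r s * ξ r s' = ζ • (ξ r s' * ξ r s))
    (rel2 : ∀ r r' s : Fin n, r < r' → r' < s → ξ r s * ξ r' s = ζ • (ξ r' s * ξ r s))
    (rel3 : ∀ r r' s' s : Fin n, r < r' → r' < s' → s' < s → ξ r s * ξ r' s' = ξ r' s' * ξ r s)
    (rel3' : ∀ r s r' s' : Fin n, r < s → s < r' → r' < s' → ξ r s * ξ r' s' = ξ r' s' * ξ r s)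
    (rel4 : ∀ r s s' : Fin n, r < s → s < s' →
      ξ r s * ξ s s' = ξ s s' * ξ r s + (ζ - ζ⁻¹) • ξ r s')
    (rel5 : ∀ r r' s s' : Fin n, r < r' → r' < s → s < s' →
      ξ r s * ξ r' s' = ξ r' s' * ξ r s + (ζ - ζ⁻¹) • (ξ r' s * ξ r s')) :
    ∀ w : List (Fin n × Fin n), (∀ p ∈ w, p.1 < p.2) →
      ((w.map fun p => ξ p.1 p.2).prod)
        ∈ Submodule.span K {x : A | ∃ a : Fin n → Fin n → ℕ, x = orderedXiMono ξ a} := by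
  classical
  set f : Fin n × Fin n → A := fun p => ξ p.1 p.2 with hf
  set S : Submodule K A :=
    Submodule.span K {x : A | ∃ a : Fin n → Fin n → ℕ, x = orderedXiMono ξ a} with hS
  -- sorted words are in S
  have sorted_mem : ∀ w : List (Fin n × Fin n), (∀ p ∈ w, p.1 < p.2) →
      w.Pairwise (fun p q => dg n p ≤ dg n q) → ((w.map f).prod) ∈ S := by
    intro w hval hsort
    apply Submodule.subset_span
    refine ⟨fun r s => w.count (r, s), ?_⟩
    rw [orderedXiMono_eq]
    rw [← sorted_eq_canonWord hval hsort]
  suffices H : ∀ N : ℕ, ∀ w : List (Fin n × Fin n), mu n w ≤ N → (∀ p ∈ w, p.1 < p.2) →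
      ((w.map f).prod) ∈ S by
    intro w hval
    exact H (mu n w) w le_rfl hval
  intro N
  induction N with
  | zero =>
    intro w hle hval
    cases w with
    | nil =>
      exact sorted_mem [] (by simp) (by simp)
    | cons p v =>
      exfalso
      have h1 := mu_nonempty_ge (p :: v) (by simp)
      have h2 : 1 ≤ (n * n + 1) ^ ((p :: v).length - 1) := Nat.one_le_pow _ _ (by omega)
      omega
  | succ N ih =>
    intro w hle hval
    haveI : IsTrans (Fin n × Fin n) (fun p q => dg n p ≤ dg n q) :=
      ⟨fun a b c h1 h2 => le_trans h1 h2⟩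
    by_cases hc : w.Chain' (fun p q => dg n p ≤ dg n q)
    · exact sorted_mem w hval (List.isChain_iff_pairwise.mp hc)
    · obtain ⟨u, a, b, v, hsplit, hab⟩ := not_chain'_split _ w hc
      have hba : dg n b < dg n a := Nat.lt_of_not_le hab
      have hmuw : mu n w = mu n (u ++ [a, b] ++ v) := by
        rw [hsplit, List.append_assoc]; rfl
      have ha_mem : a ∈ w := by rw [hsplit]; simp
      have hb_mem : b ∈ w := by rw [hsplit]; simp
      have hva : a.1 < a.2 := hval a ha_mem
      have hvb : b.1 < b.2 := hval b hb_mem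
      -- key: replacement words
      have hkey : ∀ x : List (Fin n × Fin n), (∀ p ∈ x, p.1 < p.2) →
          x.length ≤ 2 → mu n x < mu n [a, b] →
          ((u.map f).prod * (((x.map f).prod) * (v.map f).prod)) ∈ S := by
        intro x hxval hxlen hxmu
        have hmu' : mu n (u ++ x ++ v) < mu n (u ++ [a, b] ++ v) :=
          mu_replace u v x [a, b] (by simpa using hxlen) hxmu
        have hval' : ∀ p ∈ u ++ x ++ v, p.1 < p.2 := by
          intro p hp
          rcases List.mem_append.mp hp with hp | hp
          · rcases List.mem_append.mp hp with hp | hp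
            · exact hval p (by rw [hsplit]; simp [hp])
            · exact hxval p hp
          · exact hval p (by rw [hsplit]; simp [hp])
        have := ih (u ++ x ++ v) (by omega) hval'
        simpa [List.map_append, List.prod_append, mul_assoc] using this
      have hkey2 : ∀ p q : Fin n × Fin n, p.1 < p.2 → q.1 < q.2 →
          mu n [p, q] < mu n [a, b] →
          ((u.map f).prod * ((f p * f q) * (v.map f).prod)) ∈ S := by
        intro p q h1 h2 h3
        have hmem : ∀ x ∈ [p, q], x.1 < x.2 := by
          intro x hx
          rcases List.mem_cons.mp hx with rfl | hx
          · exact h1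
          · rcases List.mem_cons.mp hx with rfl | hx
            · exact h2
            · simp at hx
        have := hkey [p, q] hmem (by simp) h3
        simpa [mul_assoc] using this
      have hkey1 : ∀ p : Fin n × Fin n, p.1 < p.2 →
          ((u.map f).prod * (f p * (v.map f).prod)) ∈ S := by
        intro p h1
        have hmem : ∀ x ∈ [p], x.1 < x.2 := by
          intro x hx
          rcases List.mem_cons.mp hx with rfl | hx
          · exact h1
          · simp at hx
        have := hkey [p] hmem (by simp) (mu_single_lt_pair p a b)
        simpa [mul_assoc] using this
      have hgoal : (w.map f).prod
          = (u.map f).prod * ((f a * f b) * (v.map f).prod) := by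
        rw [hsplit]; simp [List.map_append, List.prod_append, mul_assoc]
      rw [hgoal]
      obtain ⟨r, s⟩ := a
      obtain ⟨r', s'⟩ := b
      simp only at hva hvb
      rcases lt_trichotomy r r' with hrr' | hrr' | hrr'
      · -- r < r' : cases on s vs r'
        rcases lt_trichotomy s r' with hsr' | hsr' | hsr'
        · -- s < r' : rel3' commute
          have hrel : f (r, s) * f (r', s') = f (r', s') * f (r, s) :=
            rel3' r s r' s' hva hsr' hvb
          rw [hrel]
          exact hkey2 (r', s') (r, s) hvb hva (mu_pair_lt hba)
        · -- s = r' : rel4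
          subst hsr'
          have hrel := rel4 r s s' hva hvb
          rw [show f (r, s) * f (s, s') = ξ r s * ξ s s' from rfl, hrel, add_mul, mul_add]
          refine Submodule.add_mem _ ?_ ?_
          · exact hkey2 (s, s') (r, s) hvb hva (mu_pair_lt hba)
          · rw [smul_mul_assoc, mul_smul_comm]
            exact Submodule.smul_mem _ _ (hkey1 (r, s') (lt_trans hva hvb))
        · -- r' < s : cases on s vs s'
          rcases lt_trichotomy s s' with hss' | hss' | hss'
          · -- s < s' : rel5
            have hrel := rel5 r r' s s' hrr' hsr' hss'
            rw [show f (r, s) * f (r', s') = ξ r s * ξ r' s' from rfl, hrel, add_mul, mul_add]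
            refine Submodule.add_mem _ ?_ ?_
            · exact hkey2 (r', s') (r, s) hvb hva (mu_pair_lt hba)
            · rw [smul_mul_assoc, mul_smul_comm]
              refine Submodule.smul_mem _ _ ?_
              exact hkey2 (r', s) (r, s') hsr' (lt_trans hva hss')
                (mu_pair_lt (dg_lt_of_fst_lt hrr'))
          · -- s = s' : rel2
            subst hss'
            have hrel := rel2 r r' s hrr' hsr'
            rw [show f (r, s) * f (r', s) = ξ r s * ξ r' s from rfl, hrel,
              smul_mul_assoc, mul_smul_comm]
            exact Submodule.smul_mem _ _ (hkey2 (r', s) (r, s) hvb hva (mu_pair_lt hba))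
          · -- s' < s : rel3 commute
            have hrel : ξ r s * ξ r' s' = ξ r' s' * ξ r s := rel3 r r' s' s hrr' hvb hss'
            rw [show f (r, s) * f (r', s') = ξ r s * ξ r' s' from rfl, hrel]
            exact hkey2 (r', s') (r, s) hvb hva (mu_pair_lt hba)
      · -- r = r' : then s' < s, rel1 with inverse
        subst hrr'
        have hss' : s' < s := by
          rcases lt_trichotomy s s' with h | h | h
          · exact absurd (dg_lt_of_snd_lt rfl h : dg n (r, s) < dg n (r, s')) (by omega)
          · subst h; omega
          · exact h
        have hrel := rel1 r s' s hvb hss'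
        have hrel2 : ξ r s * ξ r s' = ζ⁻¹ • (ξ r s' * ξ r s) := by
          rw [hrel, smul_smul, inv_mul_cancel₀ hζ, one_smul]
        rw [show f (r, s) * f (r, s') = ξ r s * ξ r s' from rfl, hrel2,
          smul_mul_assoc, mul_smul_comm]
        exact Submodule.smul_mem _ _ (hkey2 (r, s') (r, s) hvb hva (mu_pair_lt hba))
      · -- r' < r : impossible since dg b < dg a
        exfalso
        have := dg_lt_of_fst_lt (show (r', s').1 < (r, s).1 from hrr')
        omega

end Main
end XiAux

/-- Given elements `ξ̃_{rs}` (`r < s`) of a `K`-algebra satisfying the quantized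
coordinate-algebra relations of the unipotent radical in type `A_{n-1}`, the ordered
monomials (first index decreasing, second index increasing within each block) span
the algebra generated by the `ξ̃_{rs}` over `K`. -/
theorem stmt_11 (K : Type*) [Field K] (ζ : K) (hζ : ζ ≠ 0)
    (A : Type*) [Ring A] [Algebra K A] (n : ℕ)
    (ξ : Fin n → Fin n → A)
    (rel1 : ∀ r s s' : Fin n, r < s → s < s' → ξ r s * ξ r s' = ζ • (ξ r s' * ξ r s))
    (rel2 : ∀ r r' s : Fin n, r < r' → r' < s → ξ r s * ξ r' s = ζ • (ξ r' s * ξ r s))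
    (rel3 : ∀ r r' s' s : Fin n, r < r' → r' < s' → s' < s → ξ r s * ξ r' s' = ξ r' s' * ξ r s)
    (rel3' : ∀ r s r' s' : Fin n, r < s → s < r' → r' < s' → ξ r s * ξ r' s' = ξ r' s' * ξ r s)
    (rel4 : ∀ r s s' : Fin n, r < s → s < s' →
      ξ r s * ξ s s' = ξ s s' * ξ r s + (ζ - ζ⁻¹) • ξ r s')
    (rel5 : ∀ r r' s s' : Fin n, r < r' → r' < s → s < s' →
      ξ r s * ξ r' s' = ξ r' s' * ξ r s + (ζ - ζ⁻¹) • (ξ r' s * ξ r s')) :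
    Subalgebra.toSubmodule (Algebra.adjoin K {x : A | ∃ r s : Fin n, r < s ∧ x = ξ r s})
      = Submodule.span K {x : A | ∃ a : Fin n → Fin n → ℕ, x = orderedXiMono ξ a} := by

  classical
  have hword := XiAux.wordProd_mem ξ ζ hζ rel1 rel2 rel3 rel3' rel4 rel5
  set M : Set A := {x : A | ∃ a : Fin n → Fin n → ℕ, x = orderedXiMono ξ a} with hM
  apply le_antisymm
  · -- adjoin ≤ span
    have h1 : (1 : A) ∈ Submodule.span K M := by simpa using hword [] (by simp)
    have hmono : ∀ x y : A, x ∈ M → y ∈ M → x * y ∈ Submodule.span K M := by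
      rintro x y ⟨a, rfl⟩ ⟨b, rfl⟩
      rw [XiAux.orderedXiMono_eq, XiAux.orderedXiMono_eq, ← List.prod_append, ← List.map_append]
      apply hword
      intro p hp
      rcases List.mem_append.mp hp with hp | hp
      exacts [XiAux.mem_canonWord hp, XiAux.mem_canonWord hp]
    have hmul : ∀ x y : A, x ∈ Submodule.span K M → y ∈ Submodule.span K M →
        x * y ∈ Submodule.span K M := by
      intro x y hx hy
      have hSS : Submodule.span K M * Submodule.span K M ≤ Submodule.span K M := by
        rw [Submodule.span_mul_span]
        apply Submodule.span_le.mpr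
        rintro z hz
        rw [Set.mem_mul] at hz
        obtain ⟨x', hx', y', hy', rfl⟩ := hz
        exact hmono x' y' hx' hy'
      exact hSS (Submodule.mul_mem_mul hx hy)
    have hle : Algebra.adjoin K {x : A | ∃ r s : Fin n, r < s ∧ x = ξ r s}
        ≤ (Submodule.span K M).toSubalgebra h1 hmul := by
      apply Algebra.adjoin_le
      rintro x ⟨r, s, hrs, rfl⟩
      show ξ r s ∈ Submodule.span K M
      simpa using hword [(r, s)] (by simpa using hrs)
    intro x hx
    exact hle ((Subalgebra.mem_toSubmodule _).mp hx)
  · apply Submodule.span_le.mpr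
    rintro x ⟨a, rfl⟩
    simp only [SetLike.mem_coe, Subalgebra.mem_toSubmodule]
    unfold orderedXiMono
    apply Subalgebra.list_prod_mem
    intro y hy
    simp only [List.mem_map, List.mem_reverse, List.mem_finRange, true_and] at hy
    obtain ⟨r, rfl⟩ := hy
    apply Subalgebra.list_prod_mem
    intro z hz
    simp only [List.mem_map, List.mem_filter, List.mem_finRange, true_and] at hz
    obtain ⟨s, hs, rfl⟩ := hz
    refine pow_mem (Algebra.subset_adjoin ?_) _
    exact ⟨r, s, of_decide_eq_true hs, rfl⟩
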